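/- Let G be a finite group, H a subgroup of G of index 2, s an element of G not in H, and η : G → {±1} the nontrivial character of G that is trivial on H. Let (ρ, V) be an irreducible finite-dimensional complex representation of H with ρ^s isomorphic to ρ. Then ρ extends to a representation ρ~ of G, the twist η ⊗ ρ~ is an extension of ρ not isomorphic to ρ~, every extension of ρ to G equals ρ~ or η ⊗ ρ~, and Ind_H^G ρ is isomorphic to ρ~ ⊕ (η ⊗ ρ~). -/

import Mathlib

open LinearMap

section Defs

variable {G : Type} [Group G]

/-- A representation is `ε`-self-dual if it carries a nondegenerate invariant bilinear form `B`
with `B y x = ε * B x y`. -/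
def IsSelfDual {K V : Type} [Group K] [AddCommGroup V] [Module ℂ V]
    (ρ : Representation ℂ K V) (ε : ℂ) : Prop :=
  ∃ B : LinearMap.BilinForm ℂ V, B.Nondegenerate ∧
    (∀ (k : K) (x y : V), B (ρ k x) (ρ k y) = B x y) ∧
    ∀ x y : V, B y x = ε * B x y

/-- A representation `ρ` of an index-two subgroup `H` of `G` is `(ε, s)`-conjugate-dual
(for `s ∈ G - H`) if it carries a nondegenerate bilinear form `B` with
`B (ρ h x) (ρ (s h s⁻¹) y) = B x y` and `B x (ρ (s²) y) = ε * B y x`.  (The membership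
facts `s * h * s⁻¹ ∈ H` and `s * s ∈ H` are automatic when `H` has index two and `s ∉ H`;
they are universally quantified here.) -/
def IsConjDual {V : Type} [AddCommGroup V] [Module ℂ V] (H : Subgroup G)
    (ρ : Representation ℂ H V) (s : G) (ε : ℂ) : Prop :=
  ∃ B : LinearMap.BilinForm ℂ V, B.Nondegenerate ∧
    (∀ (h : H) (hm : s * ↑h * s⁻¹ ∈ H) (x y : V),
      B (ρ h x) (ρ ⟨s * ↑h * s⁻¹, hm⟩ y) = B x y) ∧
    ∀ (hm : s * s ∈ H) (x y : V), B x (ρ ⟨s * s, hm⟩ y) = ε * B y x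

/-- Isomorphism of representations. -/
def RepIso {K : Type} [Group K] {V W : Type} [AddCommGroup V] [Module ℂ V]
    [AddCommGroup W] [Module ℂ W]
    (ρ : Representation ℂ K V) (π : Representation ℂ K W) : Prop :=
  ∃ e : V ≃ₗ[ℂ] W, ∀ (k : K) (x : V), e (ρ k x) = π k (e x)

/-- `ρ^s ≅ ρ`:  the conjugate representation `h ↦ ρ (s h s⁻¹)` is isomorphic to `ρ`. -/
def ConjIsoSelf {V : Type} [AddCommGroup V] [Module ℂ V] (H : Subgroup G)
    (ρ : Representation ℂ H V) (s : G) : Prop :=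
  ∃ e : V ≃ₗ[ℂ] V, ∀ (h : H) (hm : s * ↑h * s⁻¹ ∈ H) (x : V),
    e (ρ ⟨s * ↑h * s⁻¹, hm⟩ x) = ρ h (e x)

/-- Irreducibility of a representation: the space is nonzero and the only invariant
submodules are `⊥` and `⊤`. -/
def IsIrreducibleRep {K V : Type} [Group K] [AddCommGroup V] [Module ℂ V]
    (ρ : Representation ℂ K V) : Prop :=
  Nontrivial V ∧
    ∀ U : Submodule ℂ V, (∀ (k : K) (x : V), x ∈ U → ρ k x ∈ U) → U = ⊥ ∨ U = ⊤

/-- An invariant submodule is irreducible if it is nonzero and has no proper nonzero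
invariant submodule. -/
def IsIrreducibleSubmodule {K V : Type} [Group K] [AddCommGroup V] [Module ℂ V]
    (ρ : Representation ℂ K V) (U : Submodule ℂ V) : Prop :=
  U ≠ ⊥ ∧ ∀ W : Submodule ℂ V, W ≤ U → (∀ (k : K) (x : V), x ∈ W → ρ k x ∈ W) →
    W = ⊥ ∨ W = U

/-- A representation is semisimple if its space is the internal direct sum of a family of
irreducible invariant submodules. -/
def IsSemisimpleRep {K V : Type} [Group K] [AddCommGroup V] [Module ℂ V]
    (ρ : Representation ℂ K V) : Prop :=
  ∃ (ι : Type) (U : ι → Submodule ℂ V),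
    (∀ i, ∀ (k : K) (x : V), x ∈ U i → ρ k x ∈ U i) ∧
    (∀ i, IsIrreducibleSubmodule ρ (U i)) ∧
    (letI := Classical.decEq ι; DirectSum.IsInternal U)

/-- The space of the induced representation `Ind_H^G ρ`: functions `f : G → V` with
`f (h * g) = ρ h (f g)`. -/
def IndCarrier (H : Subgroup G) {V : Type} [AddCommGroup V] [Module ℂ V]
    (ρ : Representation ℂ H V) : Submodule ℂ (G → V) where
  carrier := {f | ∀ (h : H) (g : G), f (↑h * g) = ρ h (f g)}
  add_mem' := by
    intro f g hf hg h x
    simp [hf h x, hg h x]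
  zero_mem' := by intro h x; simp
  smul_mem' := by
    intro c f hf h x
    simp [hf h x]

/-- The induced representation `Ind_H^G ρ`, with `G` acting by right translation. -/
def IndRep (H : Subgroup G) {V : Type} [AddCommGroup V] [Module ℂ V]
    (ρ : Representation ℂ H V) : Representation ℂ G (IndCarrier H ρ) where
  toFun g :=
    { toFun := fun f => ⟨fun x => (f : G → V) (x * g), fun h x => by
        simpa [mul_assoc] using f.2 h (x * g)⟩
      map_add' := fun f f' => by ext x; simp
      map_smul' := fun c f => by ext x; simp }
  map_one' := by
    ext f x
    simp
  map_mul' g g' := by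
    ext f x
    simp [mul_assoc]

end Defs
section Extra

/-- The twist `η ⊗ π` of a representation `π` by a character `η`. -/
def TwistRep {K W : Type} [Group K] [AddCommGroup W] [Module ℂ W]
    (η : K →* ℂˣ) (π : Representation ℂ K W) : Representation ℂ K W where
  toFun k := (η k : ℂ) • π k
  map_one' := by simp
  map_mul' k k' := by
    simp only [map_mul, Units.val_mul]
    rw [smul_mul_smul_comm]

/-- The direct sum `π₁ ⊕ π₂` of two representations. -/
def ProdRep {K V₁ V₂ : Type} [Group K] [AddCommGroup V₁] [Module ℂ V₁]
    [AddCommGroup V₂] [Module ℂ V₂]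
    (π₁ : Representation ℂ K V₁) (π₂ : Representation ℂ K V₂) :
    Representation ℂ K (V₁ × V₂) where
  toFun k := (π₁ k).prodMap (π₂ k)
  map_one' := by ext x <;> simp
  map_mul' k k' := by ext x <;> simp

end Extra

section MyAux

variable {G : Type} [Group G]

namespace ExtAux

variable {H : Subgroup G} {s : G}

lemma memss (hH : H.index = 2) (hs : s ∉ H) : s * s ∈ H := by
  rw [Subgroup.mul_mem_iff_of_index_two hH]

lemma inv_not_mem (hH : H.index = 2) (hs : s ∉ H) : s⁻¹ ∉ H := fun h => hs (by simpa using H.inv_mem h)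

lemma conj_mem (hH : H.index = 2) (hs : s ∉ H) {h : G} (hh : h ∈ H) : s * h * s⁻¹ ∈ H := by
  rw [Subgroup.mul_mem_iff_of_index_two hH, Subgroup.mul_mem_iff_of_index_two hH]
  have := inv_not_mem hH hs; tauto

lemma mul_inv_mem (hH : H.index = 2) (hs : s ∉ H) {g : G} (hg : g ∉ H) : g * s⁻¹ ∈ H := by
  rw [Subgroup.mul_mem_iff_of_index_two hH]
  have := inv_not_mem hH hs; tauto

lemma schur {K V : Type} [Group K] [AddCommGroup V] [Module ℂ V] [FiniteDimensional ℂ V]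
    (ρ : Representation ℂ K V) (hirr : IsIrreducibleRep ρ) (T : V →ₗ[ℂ] V)
    (hT : ∀ (k : K) (x : V), T (ρ k x) = ρ k (T x)) : ∃ c : ℂ, ∀ x, T x = c • x := by
  haveI : Nontrivial V := hirr.1
  obtain ⟨μ, hμ⟩ := Module.End.exists_eigenvalue (T : Module.End ℂ V)
  refine ⟨μ, fun x => ?_⟩
  have hinv : ∀ (k : K) (y : V), y ∈ Module.End.eigenspace T μ →
      ρ k y ∈ Module.End.eigenspace T μ := by
    intro k y hy
    rw [Module.End.mem_eigenspace_iff] at hy ⊢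
    show T (ρ k y) = μ • ρ k y
    rw [hT, hy, map_smul]
  rcases hirr.2 _ hinv with h | h
  · exact absurd h (Module.End.hasEigenvalue_iff.mp hμ)
  · have : x ∈ Module.End.eigenspace T μ := h ▸ Submodule.mem_top
    exact Module.End.mem_eigenspace_iff.mp this

variable {V : Type} [AddCommGroup V] [Module ℂ V]

open Classical in
/-- Extension of `ρ` to `G` given an operator `A` implementing `s`. -/
noncomputable def extRep (H : Subgroup G) (hH : H.index = 2) (s : G) (hs : s ∉ H)
    (ρ : Representation ℂ H V) (A : V →ₗ[ℂ] V)
    (hA1 : ∀ (h : G) (hh : h ∈ H) (x : V),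
      A (ρ ⟨h, hh⟩ x) = ρ ⟨s * h * s⁻¹, conj_mem hH hs hh⟩ (A x))
    (hA2 : ∀ x : V, A (A x) = ρ ⟨s * s, memss hH hs⟩ x) :
    Representation ℂ G V where
  toFun g := if hg : g ∈ H then ρ ⟨g, hg⟩ else ρ ⟨g * s⁻¹, mul_inv_mem hH hs hg⟩ ∘ₗ A
  map_one' := by
    beta_reduce
    rw [dif_pos H.one_mem]
    exact map_one ρ
  map_mul' g₁ g₂ := by
    have rcg : ∀ {a b : G} (ha : a ∈ H) (hb : b ∈ H), a = b → ∀ x : V,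
        ρ ⟨a, ha⟩ x = ρ ⟨b, hb⟩ x := by
      intro a b ha hb e x
      rw [show (⟨a, ha⟩ : H) = ⟨b, hb⟩ from Subtype.ext e]
    have key : ∀ (a b : G) (ha : a ∈ H) (hb : b ∈ H) (hab : a * b ∈ H) (x : V),
        ρ ⟨a * b, hab⟩ x = ρ ⟨a, ha⟩ (ρ ⟨b, hb⟩ x) := by
      intro a b ha hb hab x
      have : (⟨a * b, hab⟩ : H) = ⟨a, ha⟩ * ⟨b, hb⟩ := rfl
      rw [this, map_mul]
      rfl
    apply LinearMap.ext
    intro x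
    by_cases h1 : g₁ ∈ H <;> by_cases h2 : g₂ ∈ H
    · have h12 : g₁ * g₂ ∈ H := H.mul_mem h1 h2
      simp only [Module.End.mul_apply, dif_pos h1, dif_pos h2, dif_pos h12]
      exact key _ _ h1 h2 h12 x
    · have h12 : ¬ (g₁ * g₂ ∈ H) := by
        rw [Subgroup.mul_mem_iff_of_index_two hH]; tauto
      have m2 : g₂ * s⁻¹ ∈ H := mul_inv_mem hH hs h2
      have m12 : g₁ * (g₂ * s⁻¹) ∈ H := H.mul_mem h1 m2
      simp only [Module.End.mul_apply, dif_pos h1, dif_neg h2, dif_neg h12,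
        LinearMap.comp_apply]
      exact (rcg _ m12 (by group) (A x)).trans (key _ _ h1 m2 m12 (A x))
    · have h12 : ¬ (g₁ * g₂ ∈ H) := by
        rw [Subgroup.mul_mem_iff_of_index_two hH]; tauto
      have m1 : g₁ * s⁻¹ ∈ H := mul_inv_mem hH hs h1
      have m3 : s * g₂ * s⁻¹ ∈ H := conj_mem hH hs h2
      have m13 : (g₁ * s⁻¹) * (s * g₂ * s⁻¹) ∈ H := H.mul_mem m1 m3
      simp only [Module.End.mul_apply, dif_neg h1, dif_pos h2, dif_neg h12,
        LinearMap.comp_apply]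
      rw [hA1 g₂ h2 x]
      exact (rcg _ m13 (by group) (A x)).trans (key _ _ m1 m3 m13 (A x))
    · have h12 : g₁ * g₂ ∈ H := by
        rw [Subgroup.mul_mem_iff_of_index_two hH]; tauto
      have m1 : g₁ * s⁻¹ ∈ H := mul_inv_mem hH hs h1
      have m2 : g₂ * s⁻¹ ∈ H := mul_inv_mem hH hs h2
      have m3 : s * (g₂ * s⁻¹) * s⁻¹ ∈ H := conj_mem hH hs m2
      have m4 : s * s ∈ H := memss hH hs
      have m34 : (s * (g₂ * s⁻¹) * s⁻¹) * (s * s) ∈ H := H.mul_mem m3 m4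
      have m134 : (g₁ * s⁻¹) * ((s * (g₂ * s⁻¹) * s⁻¹) * (s * s)) ∈ H := H.mul_mem m1 m34
      simp only [Module.End.mul_apply, dif_neg h1, dif_neg h2, dif_pos h12,
        LinearMap.comp_apply]
      rw [hA1 (g₂ * s⁻¹) m2 (A x), hA2 x]
      exact (rcg h12 m134 (by group) x).trans
        ((key _ _ m1 m34 m134 x).trans (congrArg _ (key _ _ m3 m4 m34 x)))

lemma extRep_apply_mem (H : Subgroup G) (hH : H.index = 2) (s : G) (hs : s ∉ H)
    (ρ : Representation ℂ H V) (A : V →ₗ[ℂ] V) (hA1) (hA2) {g : G} (hg : g ∈ H) :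
    extRep H hH s hs ρ A hA1 hA2 g = ρ ⟨g, hg⟩ := dif_pos hg

end ExtAux

end MyAux
/-- Let `G` be a finite group, `H` an index-two subgroup, `s ∈ G - H`, and
`η : G → {±1}` the nontrivial character of `G` trivial on `H`.  If `ρ` is an irreducible
finite-dimensional complex representation of `H` with `ρ^s ≅ ρ`, then `ρ` extends to a
representation `ρe` of `G`, the twist `η ⊗ ρe` is an extension of `ρ` not isomorphic to
`ρe`, every extension of `ρ` equals `ρe` or `η ⊗ ρe`, and
`Ind_H^G ρ ≅ ρe ⊕ (η ⊗ ρe)`. -/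
theorem exists_extension_of_conjIsoSelf {G V : Type} [Group G] [Finite G] [AddCommGroup V]
    [Module ℂ V] [FiniteDimensional ℂ V] (H : Subgroup G) (hH : H.index = 2)
    (s : G) (hs : s ∉ H) (η : G →* ℂˣ) (hη1 : ∀ h ∈ H, η h = 1) (hη2 : η ≠ 1)
    (ρ : Representation ℂ H V) (hirr : IsIrreducibleRep ρ) (hcs : ConjIsoSelf H ρ s) :
    ∃ ρe : Representation ℂ G V,
      ρe.comp H.subtype = ρ ∧
      (TwistRep η ρe).comp H.subtype = ρ ∧
      ¬ RepIso ρe (TwistRep η ρe) ∧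
      (∀ π : Representation ℂ G V, π.comp H.subtype = ρ →
        π = ρe ∨ π = TwistRep η ρe) ∧
      RepIso (IndRep H ρ) (ProdRep ρe (TwistRep η ρe)) := by
  classical
  obtain ⟨e, he⟩ := hcs
  haveI : Nontrivial V := hirr.1
  obtain ⟨x₀, hx₀⟩ := exists_ne (0 : V)
  have hss : s * s ∈ H := ExtAux.memss hH hs
  -- pointwise multiplicativity of ρ
  have rmul : ∀ (a b : H) (x : V), ρ (a * b) x = ρ a (ρ b x) := fun a b x => by
    rw [map_mul]; rfl
  have runit : ∀ (a : H) (y : V), ρ a (ρ a⁻¹ y) = y := fun a y => by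
    rw [← rmul, mul_inv_cancel, map_one]; rfl
  -- the basic intertwiner
  set B := e.symm.toLinearMap with hBdef
  have hB : ∀ (h : H) (hm : s * ↑h * s⁻¹ ∈ H) (x : V),
      B (ρ h x) = ρ ⟨s * ↑h * s⁻¹, hm⟩ (B x) := by
    intro h hm x
    apply e.injective
    show e (e.symm (ρ h x)) = e (ρ ⟨s * ↑h * s⁻¹, hm⟩ (e.symm x))
    rw [e.apply_symm_apply, he h hm, e.apply_symm_apply]
  set u : H := ⟨s * s, hss⟩ with hudef
  have hTcomm : ∀ (k : H) (x : V),
      ((ρ u⁻¹) ∘ₗ (B ∘ₗ B)) (ρ k x) = ρ k (((ρ u⁻¹) ∘ₗ (B ∘ₗ B)) x) := by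
    intro k x
    have c1 : s * ↑k * s⁻¹ ∈ H := ExtAux.conj_mem hH hs k.2
    have c2 : s * (s * ↑k * s⁻¹) * s⁻¹ ∈ H := ExtAux.conj_mem hH hs c1
    show ρ u⁻¹ (B (B (ρ k x))) = ρ k (ρ u⁻¹ (B (B x)))
    rw [hB k c1, hB ⟨_, c1⟩ c2, ← rmul, ← rmul,
      show (u⁻¹ * ⟨s * (s * ↑k * s⁻¹) * s⁻¹, c2⟩ : H) = k * u⁻¹ from
        Subtype.ext (by show (s*s)⁻¹ * (s * (s * ↑k * s⁻¹) * s⁻¹) = ↑k * (s*s)⁻¹; group)]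
  obtain ⟨c, hc⟩ := ExtAux.schur ρ hirr _ hTcomm
  have hBB : ∀ x : V, B (B x) = c • ρ u x := by
    intro x
    have h1 : ρ u⁻¹ (B (B x)) = c • x := hc x
    calc B (B x) = ρ u (ρ u⁻¹ (B (B x))) := (runit u _).symm
      _ = ρ u (c • x) := by rw [h1]
      _ = c • ρ u x := map_smul _ _ _
  have hz : ∀ y : V, e.symm y = 0 → y = 0 := fun y hy => by
    simpa using congrArg e hy
  have hc0 : c ≠ 0 := by
    intro h0
    have h1 := hBB x₀
    rw [h0, zero_smul] at h1
    exact hx₀ (hz _ (hz _ h1))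
  obtain ⟨l, hl⟩ := IsAlgClosed.exists_pow_nat_eq (c⁻¹ : ℂ) (n := 2) zero_lt_two
  have hll : l * l = c⁻¹ := by rw [← hl]; ring
  set A : V →ₗ[ℂ] V := l • B with hAdef
  have hA1 : ∀ (h : G) (hh : h ∈ H) (x : V),
      A (ρ ⟨h, hh⟩ x) = ρ ⟨s * h * s⁻¹, ExtAux.conj_mem hH hs hh⟩ (A x) := by
    intro h hh x
    show l • B (ρ ⟨h, hh⟩ x) = ρ ⟨s * h * s⁻¹, _⟩ (l • B x)
    rw [hB ⟨h, hh⟩ (ExtAux.conj_mem hH hs hh), map_smul]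
  have hA2 : ∀ x : V, A (A x) = ρ ⟨s * s, ExtAux.memss hH hs⟩ x := by
    intro x
    show l • B (l • B x) = _
    rw [map_smul, hBB x, smul_smul, smul_smul, hll, inv_mul_cancel₀ hc0, one_smul]
  set ρe := ExtAux.extRep H hH s hs ρ A hA1 hA2 with hρedef
  have hre : ∀ (g : G) (hg : g ∈ H), ρe g = ρ ⟨g, hg⟩ := fun g hg =>
    ExtAux.extRep_apply_mem H hH s hs ρ A hA1 hA2 hg
  have hresH : ρe.comp H.subtype = ρ := MonoidHom.ext fun k => hre ↑k k.2
  have hcompE : ∀ (a b : G) (x : V), ρe (a * b) x = ρe a (ρe b x) := fun a b x => by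
    rw [map_mul]; rfl
  have hcancel : ∀ (a : G) (x : V), ρe a (ρe a⁻¹ x) = x := fun a x => by
    rw [← hcompE, mul_inv_cancel, map_one]; rfl
  have hcancel' : ∀ (a : G) (x : V), ρe a⁻¹ (ρe a x) = x := fun a x => by
    rw [← hcompE, inv_mul_cancel, map_one]; rfl
  -- values of η
  have hηs : η s = -1 := by
    have hηs2 : η s * η s = 1 := by rw [← map_mul]; exact hη1 _ hss
    have hv : (η s : ℂ) * (η s : ℂ) = 1 := by
      rw [← Units.val_mul, hηs2, Units.val_one]
    rcases mul_self_eq_one_iff.mp hv with h' | h'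
    · exfalso
      have h : η s = 1 := Units.ext (by rw [h']; simp)
      apply hη2
      apply MonoidHom.ext
      intro g
      by_cases hg : g ∈ H
      · exact hη1 g hg
      · show η g = 1
        calc η g = η ((g * s⁻¹) * s) := by rw [inv_mul_cancel_right]
          _ = η (g * s⁻¹) * η s := map_mul _ _ _
          _ = 1 := by rw [hη1 _ (ExtAux.mul_inv_mem hH hs hg), h, mul_one]
    · exact Units.ext (by rw [h']; simp)
  have hηg : ∀ g ∉ H, η g = -1 := by
    intro g hg
    calc η g = η (g * s⁻¹) * η s := by rw [← map_mul, inv_mul_cancel_right]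
      _ = -1 := by rw [hη1 _ (ExtAux.mul_inv_mem hH hs hg), hηs, one_mul]
  refine ⟨ρe, hresH, ?_, ?_, ?_, ?_⟩
  · -- twist restricts to ρ
    apply MonoidHom.ext
    intro k
    show (η ↑k : ℂ) • ρe ↑k = ρ k
    rw [hη1 ↑k k.2, hre ↑k k.2]
    simp
  · -- not isomorphic to the twist
    rintro ⟨f, hf⟩
    have hfH : ∀ (k : H) (x : V), f.toLinearMap (ρ k x) = ρ k (f.toLinearMap x) := by
      intro k x
      have h0 : f (ρe ↑k x) = (η ↑k : ℂ) • ρe ↑k (f x) := hf ↑k x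
      have h1 : (η (↑k : G) : ℂ) = 1 := by rw [hη1 ↑k k.2]; rfl
      rw [hre ↑k k.2, h1, one_smul] at h0
      exact h0
    obtain ⟨c', hc'⟩ := ExtAux.schur ρ hirr f.toLinearMap hfH
    have hc'0 : c' ≠ 0 := by
      intro h0
      have h1 : f x₀ = c' • x₀ := hc' x₀
      rw [h0, zero_smul] at h1
      exact hx₀ (f.injective (h1.trans (map_zero f).symm))
    have h0 : f (ρe s x₀) = (η s : ℂ) • ρe s (f x₀) := hf s x₀
    have e1 : f (ρe s x₀) = c' • ρe s x₀ := hc' _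
    have e2 : f x₀ = c' • x₀ := hc' _
    have e3 : (η s : ℂ) = -1 := by rw [hηs]; simp
    rw [e1, e2, e3, map_smul, neg_one_smul] at h0
    have h4 : ρe s x₀ ≠ 0 := by
      intro hz'
      apply hx₀
      have := congrArg (ρe s⁻¹) hz'
      rwa [hcancel', map_zero] at this
    have h5 : c' • ρe s x₀ + c' • ρe s x₀ = 0 := eq_neg_iff_add_eq_zero.mp h0
    rw [← add_smul] at h5
    rcases smul_eq_zero.mp h5 with h | h
    · exact hc'0 (by linear_combination h / 2)
    · exact h4 h
  · -- uniqueness of extensions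
    intro π hπ
    have hπH : ∀ (k : H) (x : V), π ↑k x = ρ k x := by
      intro k x; rw [← hπ]; rfl
    have hπmul : ∀ (a b : G) (y : V), π (a * b) y = π a (π b y) := fun a b y => by
      rw [map_mul]; rfl
    have hcomm : ∀ (k : H) (x : V),
        ((π s) ∘ₗ (ρe s⁻¹)) (ρ k x) = ρ k (((π s) ∘ₗ (ρe s⁻¹)) x) := by
      intro k x
      have m : s⁻¹ * ↑k * s ∈ H := by
        have := ExtAux.conj_mem hH (ExtAux.inv_not_mem hH hs) k.2
        rwa [inv_inv] at this
      show π s (ρe s⁻¹ (ρ k x)) = ρ k (π s (ρe s⁻¹ x))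
      have step1 : ρe s⁻¹ (ρ k x) = ρ ⟨s⁻¹ * ↑k * s, m⟩ (ρe s⁻¹ x) := by
        have h1 : ρ k x = ρe ↑k x := by rw [hre ↑k k.2]
        have h2 : (s⁻¹ * ↑k : G) = (s⁻¹ * ↑k * s) * s⁻¹ := by group
        rw [h1, ← hcompE]
        conv_lhs => rw [h2]
        rw [hcompE, hre _ m]
      rw [step1, ← hπH ⟨_, m⟩, ← hπH k, ← hπmul, ← hπmul,
        show (s * (s⁻¹ * ↑k * s) : G) = ↑k * s from by group]
    obtain ⟨c', hc'⟩ := ExtAux.schur ρ hirr _ hcomm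
    have hπs : ∀ x : V, π s x = c' • ρe s x := by
      intro x
      have h1 : π s (ρe s⁻¹ (ρe s x)) = c' • ρe s x := hc' (ρe s x)
      rwa [hcancel'] at h1
    have hy : ρe (s * s) x₀ ≠ 0 := by
      intro hz'
      apply hx₀
      have := congrArg (ρe (s * s)⁻¹) hz'
      rwa [hcancel', map_zero] at this
    have hcc : c' * c' = 1 := by
      have h1 : π (s * s) x₀ = ρe (s * s) x₀ := by
        rw [hre _ hss]
        exact hπH ⟨_, hss⟩ x₀
      have h2 : π (s * s) x₀ = (c' * c') • ρe (s * s) x₀ := by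
        rw [hπmul, hπs x₀, map_smul, hπs, smul_smul, ← hcompE]
      have h3 : (c' * c') • ρe (s * s) x₀ = ρe (s * s) x₀ := h2.symm.trans h1
      have h4 : (c' * c' - 1) • ρe (s * s) x₀ = 0 := by
        rw [sub_smul, one_smul, h3, sub_self]
      rcases smul_eq_zero.mp h4 with h | h
      · exact sub_eq_zero.mp h
      · exact absurd h hy
    have hmem : ∀ (g : G) (hg : g ∈ H) (x : V), π g x = ρe g x := by
      intro g hg x
      rw [hre g hg]
      exact hπH ⟨g, hg⟩ x
    have hnot : ∀ (g : G), g ∉ H → ∀ (x : V), π g x = c' • ρe g x := by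
      intro g hg x
      have hg2 : g * s⁻¹ ∈ H := ExtAux.mul_inv_mem hH hs hg
      calc π g x = π ((g * s⁻¹) * s) x := by rw [inv_mul_cancel_right]
        _ = π (g * s⁻¹) (π s x) := hπmul _ _ _
        _ = ρ ⟨_, hg2⟩ (π s x) := hπH ⟨_, hg2⟩ _
        _ = ρe (g * s⁻¹) (π s x) := by rw [hre _ hg2]
        _ = ρe (g * s⁻¹) (c' • ρe s x) := by rw [hπs]
        _ = c' • ρe (g * s⁻¹) (ρe s x) := map_smul _ _ _
        _ = c' • ρe g x := by rw [← hcompE, inv_mul_cancel_right]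
    rcases mul_self_eq_one_iff.mp hcc with h | h
    · left
      apply MonoidHom.ext; intro g; apply LinearMap.ext; intro x
      by_cases hg : g ∈ H
      · exact hmem g hg x
      · rw [hnot g hg x, h, one_smul]
    · right
      apply MonoidHom.ext; intro g; apply LinearMap.ext; intro x
      show π g x = (η g : ℂ) • ρe g x
      by_cases hg : g ∈ H
      · rw [hη1 g hg, Units.val_one, one_smul]
        exact hmem g hg x
      · rw [hηg g hg, hnot g hg x, h]
        simp
  · -- the induced representation
    have fprop : ∀ (f : IndCarrier H ρ) (h : H) (g : G),
        (f : G → V) (↑h * g) = ρ h ((f : G → V) g) := fun f => f.2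
    have hf1 : ∀ (f : IndCarrier H ρ) (g : G), g ∈ H →
        (f : G → V) g = ρe g ((f : G → V) 1) := by
      intro f g hg
      have h1 : (f : G → V) (g * 1) = ρ ⟨g, hg⟩ ((f : G → V) 1) := fprop f ⟨g, hg⟩ 1
      rw [mul_one] at h1
      rw [hre g hg]
      exact h1
    have hf2 : ∀ (f : IndCarrier H ρ) (g : G), g ∉ H →
        (f : G → V) g = ρe g (ρe s⁻¹ ((f : G → V) s)) := by
      intro f g hg
      have m : g * s⁻¹ ∈ H := ExtAux.mul_inv_mem hH hs hg
      have h1 : (f : G → V) ((g * s⁻¹) * s) = ρ ⟨g * s⁻¹, m⟩ ((f : G → V) s) :=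
        fprop f ⟨g * s⁻¹, m⟩ s
      rw [inv_mul_cancel_right] at h1
      rw [h1, ← hre _ m]
      exact hcompE g s⁻¹ _
    have hk : ∀ (g : G) (x : V), ρe s⁻¹ (ρe (s * g) x) = ρe g x := by
      intro g x
      rw [← hcompE, show (s⁻¹ * (s * g) : G) = g from by group]
    set Φ : (IndCarrier H ρ) →ₗ[ℂ] V × V :=
      { toFun := fun f => ((f : G → V) 1 + ρe s⁻¹ ((f : G → V) s),
          (f : G → V) 1 - ρe s⁻¹ ((f : G → V) s))
        map_add' := by
          intro f g
          simp only [Submodule.coe_add, Pi.add_apply, map_add, Prod.mk_add_mk,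
            Prod.mk.injEq]
          constructor <;> abel
        map_smul' := by
          intro m f
          simp only [SetLike.val_smul, Pi.smul_apply, map_smul, Prod.smul_mk,
            RingHom.id_apply, Prod.mk.injEq]
          constructor
          · rw [smul_add]
          · rw [smul_sub] } with hΦdef
    have hinj : Function.Injective Φ := by
      rw [injective_iff_map_eq_zero]
      intro f hf0
      have h1 : (f : G → V) 1 + ρe s⁻¹ ((f : G → V) s) = 0 := congrArg Prod.fst hf0
      have h2 : (f : G → V) 1 - ρe s⁻¹ ((f : G → V) s) = 0 := congrArg Prod.snd hf0
      have e1 : (f : G → V) 1 = ρe s⁻¹ ((f : G → V) s) := sub_eq_zero.mp h2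
      rw [← e1, ← two_smul ℂ] at h1
      have ha : (f : G → V) 1 = 0 := by
        rcases smul_eq_zero.mp h1 with h | h
        · norm_num at h
        · exact h
      have hX : ρe s⁻¹ ((f : G → V) s) = 0 := e1 ▸ ha
      apply Subtype.ext
      funext g
      show (f : G → V) g = 0
      by_cases hg : g ∈ H
      · rw [hf1 f g hg, ha, map_zero]
      · rw [hf2 f g hg, hX, map_zero]
    have halfadd : ∀ v w : V, (2⁻¹ : ℂ) • (v + w) + (2⁻¹ : ℂ) • (v - w) = v := by
      intro v w
      rw [← smul_add, show v + w + (v - w) = v + v from by abel, ← two_smul ℂ, smul_smul]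
      norm_num
    have halfsub : ∀ v w : V, (2⁻¹ : ℂ) • (v + w) - (2⁻¹ : ℂ) • (v - w) = w := by
      intro v w
      rw [← smul_sub, show v + w - (v - w) = w + w from by abel, ← two_smul ℂ, smul_smul]
      norm_num
    have hsurj : Function.Surjective Φ := by
      rintro ⟨v, w⟩
      have hmemF : (fun g => if hg : g ∈ H then ρe g ((2⁻¹ : ℂ) • (v + w))
          else ρe g ((2⁻¹ : ℂ) • (v - w))) ∈ IndCarrier H ρ := by
        intro h g
        by_cases hg : g ∈ H
        · have hm : (↑h * g) ∈ H := H.mul_mem h.2 hg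
          simp only [dif_pos hg, dif_pos hm]
          rw [hcompE, hre ↑h h.2]
        · have hm : ¬ ((↑h : G) * g ∈ H) := by
            rw [Subgroup.mul_mem_iff_of_index_two hH]
            have := h.2; tauto
          simp only [dif_neg hg, dif_neg hm]
          rw [hcompE, hre ↑h h.2]
      set F : G → V := fun g => if hg : g ∈ H then ρe g ((2⁻¹ : ℂ) • (v + w))
        else ρe g ((2⁻¹ : ℂ) • (v - w)) with hFdef
      refine ⟨⟨F, hmemF⟩, ?_⟩
      have hFa : F 1 = (2⁻¹ : ℂ) • (v + w) := by
        rw [hFdef]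
        simp only [dif_pos H.one_mem, map_one, Module.End.one_apply]
      have hFs : F s = ρe s ((2⁻¹ : ℂ) • (v - w)) := by
        rw [hFdef]
        simp only [dif_neg hs]
      show (F 1 + ρe s⁻¹ (F s), F 1 - ρe s⁻¹ (F s)) = (v, w)
      rw [hFa, hFs, hcancel', Prod.mk.injEq]
      exact ⟨halfadd v w, halfsub v w⟩
    refine ⟨LinearEquiv.ofBijective Φ ⟨hinj, hsurj⟩, ?_⟩
    intro g f
    show Φ (IndRep H ρ g f) = ProdRep ρe (TwistRep η ρe) g (Φ f)
    show ((f : G → V) (1 * g) + ρe s⁻¹ ((f : G → V) (s * g)),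
        (f : G → V) (1 * g) - ρe s⁻¹ ((f : G → V) (s * g)))
      = (ρe g ((f : G → V) 1 + ρe s⁻¹ ((f : G → V) s)),
        (η g : ℂ) • ρe g ((f : G → V) 1 - ρe s⁻¹ ((f : G → V) s)))
    rw [one_mul]
    by_cases hg : g ∈ H
    · have hsg : s * g ∉ H := by
        rw [Subgroup.mul_mem_iff_of_index_two hH]; tauto
      have hη : (η g : ℂ) = 1 := by rw [hη1 g hg]; rfl
      rw [hf1 f g hg, hf2 f (s * g) hsg, hk, hη, one_smul, ← map_add, ← map_sub]
    · have hsg : s * g ∈ H := by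
        rw [Subgroup.mul_mem_iff_of_index_two hH]; tauto
      have hη : (η g : ℂ) = -1 := by rw [hηg g hg]; simp
      rw [hf2 f g hg, hf1 f (s * g) hsg, hk, hη, neg_one_smul, Prod.mk.injEq]
      constructor
      · rw [← map_add]
        exact congrArg _ (add_comm _ _)
      · rw [← map_sub, ← map_neg, neg_sub]
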